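/- Let E and Y be real Banach spaces with E having the Daugavet property, let 1 < p < ∞, and let X = E ⊕_p Y with norm ‖(e,y)‖ = (‖e‖^p + ‖y‖^p)^{1/p}. If (a,b) is an SCD point of B_X, then a = 0. -/

import Mathlib

open Set Metric

variable {X : Type*} [NormedAddCommGroup X] [NormedSpace ℝ X]

/-- A slice of a bounded convex set `A`. -/
def IsSlice (A S : Set X) : Prop :=
  S.Nonempty ∧ ∃ (f : X →L[ℝ] ℝ) (α : ℝ), 0 < α ∧
    S = {x | x ∈ A ∧ sSup (f '' A) - α < f x}

/-- `V` is a determining sequence for the point `a` of `A`. -/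
def Determining (A : Set X) (V : ℕ → Set X) (a : X) : Prop :=
  ∀ B ⊆ A, (∀ n, (B ∩ V n).Nonempty) → a ∈ closure (convexHull ℝ B)

/-- `a` is a slicely countably determined point of `A`. -/
def SCDPoint (A : Set X) (a : X) : Prop :=
  a ∈ A ∧ ∃ V : ℕ → Set X, (∀ n, IsSlice A (V n)) ∧ Determining A V a

/-- `X` has the Daugavet property: every rank-one bounded linear operator `T : X → X`
satisfies `‖Id + T‖ = 1 + ‖T‖`. -/
def DaugavetProperty (X : Type*) [NormedAddCommGroup X] [NormedSpace ℝ X] : Prop :=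
  ∀ T : X →L[ℝ] X, (∃ (f : X →L[ℝ] ℝ) (y : X), f ≠ 0 ∧ y ≠ 0 ∧ T = f.smulRight y) →
    ‖ContinuousLinearMap.id ℝ X + T‖ = 1 + ‖T‖

/-- Dependent-choice style recursion producing a sequence together with stage data. -/
theorem exists_good_seq {α : Type*} {G : Type*} (Good : (n : ℕ) → (Fin (n+1) → α) → G → Prop)
    (base : ∃ x g, Good 0 x g)
    (step : ∀ n xs g, Good n xs g → ∃ x' g', Good (n+1) (Fin.snoc xs x') g') :
    ∃ (x : ℕ → α) (g : ℕ → G), ∀ n, Good n (fun i => x i) (g n) := by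
  classical
  let F : ∀ n : ℕ, {q : (Fin (n+1) → α) × G // Good n q.1 q.2} := fun n =>
    Nat.rec (motive := fun n => {q : (Fin (n+1) → α) × G // Good n q.1 q.2})
      ⟨⟨base.choose, base.choose_spec.choose⟩, base.choose_spec.choose_spec⟩
      (fun n ih =>
        let e := step n ih.1.1 ih.1.2 ih.2
        ⟨⟨Fin.snoc ih.1.1 e.choose, e.choose_spec.choose⟩, e.choose_spec.choose_spec⟩) n
  have hcoh : ∀ n (i : Fin (n+1)), (F (n+1)).1.1 i.castSucc = (F n).1.1 i := by
    intro n i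
    show (Fin.snoc (F n).1.1 ((step n (F n).1.1 (F n).1.2 (F n).2).choose) :
      Fin (n+2) → α) i.castSucc = _
    rw [Fin.snoc_castSucc]
  refine ⟨fun n => (F n).1.1 (Fin.last n), fun n => (F n).1.2, ?_⟩
  have hx : ∀ n (i : Fin (n+1)), (F n).1.1 i = (F (i : ℕ)).1.1 (Fin.last i) := by
    intro n
    induction n with
    | zero =>
      intro i
      rcases i with ⟨iv, hi⟩
      obtain rfl : iv = 0 := by omega
      rfl
    | succ n ih =>
      intro i
      rcases Fin.eq_castSucc_or_eq_last i with ⟨j, rfl⟩ | rfl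
      · rw [hcoh n j]; exact ih j
      · rfl
  intro n
  have : (fun i : Fin (n+1) => (F (i : ℕ)).1.1 (Fin.last i)) = (F n).1.1 := by
    funext i; rw [← hx n i]
  rw [this]
  exact (F n).2

theorem comb_norm (x y : X) (hx : ‖x‖ ≤ 1) (hy : ‖y‖ ≤ 1)
    (s t : ℝ) (hs : 0 ≤ s) (ht : 0 ≤ t) :
    s + t - (s + t) * (2 - ‖x + y‖) ≤ ‖s • x + t • y‖ := by
  have h2 : 0 ≤ 2 - ‖x + y‖ := by have := norm_add_le x y; linarith
  have key : ∀ (x y : X), ‖x‖ ≤ 1 → ‖y‖ ≤ 1 → ∀ s t : ℝ, 0 ≤ s → 0 ≤ t → t ≤ s →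
      s + t - (s + t) * (2 - ‖x + y‖) ≤ ‖s • x + t • y‖ := by
    intro x y hx hy s t hs ht hts
    have h2 : 0 ≤ 2 - ‖x + y‖ := by have := norm_add_le x y; linarith
    have e1 : s • x + t • y = s • (x + y) - (s - t) • y := by
      rw [smul_add, sub_smul]; abel
    have e2 : ‖s • (x + y)‖ - ‖(s - t) • y‖ ≤ ‖s • x + t • y‖ := by
      rw [e1]; exact norm_sub_norm_le _ _
    rw [norm_smul, norm_smul, Real.norm_eq_abs, Real.norm_eq_abs,
      abs_of_nonneg hs, abs_of_nonneg (by linarith : (0:ℝ) ≤ s - t)] at e2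
    nlinarith [mul_nonneg ht h2, mul_le_of_le_one_right (by linarith : (0:ℝ) ≤ s - t) hy]
  rcases le_total t s with h | h
  · exact key x y hx hy s t hs ht h
  · have := key y x hy hx t s ht hs h
    rw [add_comm y x] at this
    calc s + t - (s + t) * (2 - ‖x + y‖)
        = t + s - (t + s) * (2 - ‖x + y‖) := by ring
      _ ≤ ‖t • y + s • x‖ := this
      _ = ‖s • x + t • y‖ := by rw [add_comm]

theorem daugavet_slice {E : Type*} [NormedAddCommGroup E] [NormedSpace ℝ E]
    (hE : DaugavetProperty E)
    (ψ : E →L[ℝ] ℝ) (t : ℝ) (x₀ : E) (hx₀ : ‖x₀‖ ≤ 1) (ht : t < ψ x₀)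
    (w : E) (hw : ‖w‖ = 1) (δ : ℝ) (hδ : 0 < δ) :
    ∃ x : E, ‖x‖ ≤ 1 ∧ t < ψ x ∧ 2 - δ < ‖x + w‖ := by
  by_cases hψ : ψ = 0
  · refine ⟨w, le_of_eq hw, by simpa [hψ] using ht, ?_⟩
    have h2 : w + w = (2:ℝ) • w := (two_smul ℝ w).symm
    rw [h2, norm_smul, hw]
    norm_num; linarith
  · have hψn : 0 < ‖ψ‖ := norm_pos_iff.mpr hψ
    have htψ : t < ‖ψ‖ := by
      have h1 : ψ x₀ ≤ ‖ψ‖ := by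
        calc ψ x₀ ≤ |ψ x₀| := le_abs_self _
          _ = ‖ψ x₀‖ := (Real.norm_eq_abs _).symm
          _ ≤ ‖ψ‖ * ‖x₀‖ := ψ.le_opNorm x₀
          _ ≤ ‖ψ‖ * 1 := mul_le_mul_of_nonneg_left hx₀ hψn.le
          _ = ‖ψ‖ := mul_one _
      linarith
    have hwne : w ≠ 0 := by intro h0; rw [h0, norm_zero] at hw; norm_num at hw
    set w' : E := ‖ψ‖⁻¹ • w with hw'def
    have hw'norm : ‖w'‖ = ‖ψ‖⁻¹ := by
      rw [hw'def, norm_smul, Real.norm_eq_abs, abs_of_nonneg (by positivity), hw, mul_one]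
    have hw'ne : w' ≠ 0 := by
      intro h0; rw [h0, norm_zero] at hw'norm
      have : (0:ℝ) < ‖ψ‖⁻¹ := by positivity
      rw [← hw'norm] at this; exact lt_irrefl _ this
    set θ : E → ℝ := fun z => ‖ψ‖⁻¹ * ψ z with hθdef
    have hθw' : ∀ z : E, ψ z • w' = θ z • w := by
      intro z
      rw [hw'def, smul_smul, hθdef, mul_comm]
    have hθle : ∀ z : E, |θ z| ≤ ‖z‖ := by
      intro z
      rw [hθdef]
      calc |‖ψ‖⁻¹ * ψ z| = ‖ψ‖⁻¹ * |ψ z| := by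
            rw [abs_mul, abs_of_nonneg (by positivity)]
        _ ≤ ‖ψ‖⁻¹ * (‖ψ‖ * ‖z‖) := by
            apply mul_le_mul_of_nonneg_left _ (by positivity)
            rw [← Real.norm_eq_abs]; exact ψ.le_opNorm z
        _ = ‖z‖ := by field_simp
    set T := ψ.smulRight w' with hTdef
    have hTnorm : ‖T‖ = 1 := by
      rw [hTdef, ContinuousLinearMap.norm_smulRight_apply, hw'norm]
      field_simp
    have hIdT : ‖ContinuousLinearMap.id ℝ E + T‖ = 2 := by
      rw [hE T ⟨ψ, w', hψ, hw'ne, rfl⟩, hTnorm]; norm_num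
    set δ' := min (δ/2) ((‖ψ‖ - t)/(2*‖ψ‖)) with hδ'def
    have hδ'pos : 0 < δ' := lt_min (by linarith) (div_pos (by linarith) (by positivity))
    have hδ'δ : δ' ≤ δ/2 := min_le_left _ _
    have hδ't : δ' ≤ (‖ψ‖ - t)/(2*‖ψ‖) := min_le_right _ _
    obtain ⟨x, hx1, hx2⟩ := (ContinuousLinearMap.id ℝ E + T).exists_lt_apply_of_lt_opNorm
      (r := 2 - δ') (by rw [hIdT]; linarith)
    have hTx : (ContinuousLinearMap.id ℝ E + T) x = x + θ x • w := by
      rw [← hθw' x]; simp [hTdef]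
    rw [hTx] at hx2
    have habs : 1 - δ' < |θ x| := by
      have h1 : ‖x + θ x • w‖ ≤ ‖x‖ + |θ x| := by
        calc ‖x + θ x • w‖ ≤ ‖x‖ + ‖θ x • w‖ := norm_add_le _ _
          _ = ‖x‖ + |θ x| := by rw [norm_smul, Real.norm_eq_abs, hw, mul_one]
      linarith
    obtain ⟨x', hx'1, hx'2, hx'3⟩ : ∃ x', ‖x'‖ ≤ 1 ∧ 1 - δ' < θ x' ∧
        2 - δ' < ‖x' + θ x' • w‖ := by
      rcases le_or_gt 0 (θ x) with hsgn | hsgn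
      · exact ⟨x, hx1.le, by rwa [abs_of_nonneg hsgn] at habs, hx2⟩
      · refine ⟨-x, by simpa using hx1.le, ?_, ?_⟩
        · have hneg : θ (-x) = -θ x := by rw [hθdef]; simp
          rw [hneg]; rwa [abs_of_neg hsgn] at habs
        · have hneg : θ (-x) = -θ x := by rw [hθdef]; simp
          rw [hneg, neg_smul, ← neg_add, norm_neg]; exact hx2
    have hθx'le : θ x' ≤ 1 := le_trans (le_abs_self _) (le_trans (hθle x') hx'1)
    refine ⟨x', hx'1, ?_, ?_⟩
    · have hψx' : ψ x' = ‖ψ‖ * θ x' := by rw [hθdef]; field_simp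
      have h1 : ‖ψ‖ * δ' ≤ (‖ψ‖ - t)/2 := by
        calc ‖ψ‖ * δ' ≤ ‖ψ‖ * ((‖ψ‖ - t)/(2*‖ψ‖)) :=
            mul_le_mul_of_nonneg_left hδ't hψn.le
          _ = (‖ψ‖ - t)/2 := by field_simp
      have h2 : ‖ψ‖ * (1 - δ') < ‖ψ‖ * θ x' := mul_lt_mul_of_pos_left hx'2 hψn
      rw [mul_one_sub] at h2
      rw [hψx']
      linarith
    · have h1 : ‖x' + θ x' • w‖ - |1 - θ x'| ≤ ‖x' + w‖ := by
        have e1 : x' + w = (x' + θ x' • w) + (1 - θ x') • w := by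
          rw [sub_smul, one_smul]; abel
        have h := norm_sub_norm_le (x' + θ x' • w) (-((1 - θ x') • w))
        rw [norm_neg, sub_neg_eq_add] at h
        rw [e1]
        calc ‖x' + θ x' • w‖ - |1 - θ x'|
            = ‖x' + θ x' • w‖ - ‖(1 - θ x') • w‖ := by
              rw [norm_smul, Real.norm_eq_abs, hw, mul_one]
          _ ≤ _ := h
      rw [abs_of_nonneg (by linarith)] at h1
      linarith

section pfacts
variable (p : ENNReal) [Fact (1 ≤ p)]

theorem aux_toReal_pos (hp2 : p ≠ ⊤) : 0 < p.toReal := by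
  apply ENNReal.toReal_pos _ hp2
  have h1 : (1:ENNReal) ≤ p := Fact.out
  intro h0; rw [h0] at h1; exact (not_le.mpr zero_lt_one) h1

theorem aux_rpow_inv_le_one_iff (hp2 : p ≠ ⊤) (S : ℝ) (hS : 0 ≤ S) :
    S ^ (1/p.toReal) ≤ 1 ↔ S ≤ 1 := by
  have hpr := aux_toReal_pos p hp2
  constructor
  · intro h
    have h2 : (S ^ (1/p.toReal)) ^ p.toReal ≤ 1 ^ p.toReal :=
      Real.rpow_le_rpow (Real.rpow_nonneg hS _) h hpr.le
    rwa [← Real.rpow_mul hS, one_div, inv_mul_cancel₀ hpr.ne', Real.rpow_one,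
      Real.one_rpow] at h2
  · intro h
    exact Real.rpow_le_one hS h (by positivity)

variable {E Y : Type*} [NormedAddCommGroup E] [NormedSpace ℝ E]
    [NormedAddCommGroup Y] [NormedSpace ℝ Y]

theorem aux_fst_norm_le (hp2 : p ≠ ⊤) (z : WithLp p (E × Y)) : ‖z.fst‖ ≤ ‖z‖ := by
  have hpr := aux_toReal_pos p hp2
  rw [WithLp.prod_norm_eq_add hpr z]
  have h0 : ‖z.fst‖ = (‖z.fst‖ ^ p.toReal) ^ (1/p.toReal) := by
    rw [← Real.rpow_mul (norm_nonneg _), mul_one_div, div_self hpr.ne', Real.rpow_one]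
  calc ‖z.fst‖ = (‖z.fst‖ ^ p.toReal) ^ (1/p.toReal) := h0
    _ ≤ (‖z.fst‖ ^ p.toReal + ‖z.snd‖ ^ p.toReal) ^ (1/p.toReal) :=
      Real.rpow_le_rpow (by positivity)
        (le_add_of_nonneg_right (Real.rpow_nonneg (norm_nonneg _) _)) (by positivity)

theorem aux_mem_ball_iff (hp2 : p ≠ ⊤) (e : E) (y : Y) :
    ‖(WithLp.equiv p (E × Y)).symm (e, y)‖ ≤ 1 ↔ ‖e‖ ^ p.toReal + ‖y‖ ^ p.toReal ≤ 1 := by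
  have hpr := aux_toReal_pos p hp2
  rw [WithLp.prod_norm_eq_add hpr]
  exact aux_rpow_inv_le_one_iff p hp2 _ (by positivity)

noncomputable def inlLp : E →L[ℝ] WithLp p (E × Y) :=
  ((WithLp.prodContinuousLinearEquiv p ℝ E Y).symm :
    (E × Y) →L[ℝ] WithLp p (E × Y)).comp (ContinuousLinearMap.inl ℝ E Y)

theorem inlLp_apply (e : E) :
    (inlLp p (E := E) (Y := Y) e) = (WithLp.equiv p (E × Y)).symm (e, 0) := rfl

end pfacts

theorem step_lemma {E Y : Type*} [NormedAddCommGroup E] [NormedSpace ℝ E]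
    [NormedAddCommGroup Y] [NormedSpace ℝ Y]
    (hE : DaugavetProperty E) (p : ENNReal) [Fact (1 ≤ p)] (hp2 : p ≠ ⊤)
    (φ : WithLp p (E × Y) →L[ℝ] ℝ) (c : ℝ) (x₀ : WithLp p (E × Y))
    (hx₀A : ‖x₀‖ ≤ 1) (hx₀ : c < φ x₀) (w : E) (δ : ℝ) (hδ : 0 < δ) (hδw : δ < ‖w‖) :
    ∃ x' : WithLp p (E × Y), ‖x'‖ ≤ 1 ∧ c < φ x' ∧
      ∃ g : E →L[ℝ] ℝ, ‖g‖ = 1 ∧ ‖x'.fst‖ - δ ≤ g x'.fst ∧ ‖w‖ - δ ≤ g w := by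
  have hpr := aux_toReal_pos p hp2
  have hw0 : w ≠ 0 := by
    intro h0; rw [h0, norm_zero] at hδw; linarith
  set e₀ := x₀.fst with he₀def
  set y₀ := x₀.snd with hy₀def
  have hx₀eq : (WithLp.equiv p (E × Y)).symm (e₀, y₀) = x₀ := rfl
  have hx₀mem : ‖e₀‖ ^ p.toReal + ‖y₀‖ ^ p.toReal ≤ 1 := by
    rw [← aux_mem_ball_iff p hp2 e₀ y₀, hx₀eq]; exact hx₀A
  have hs : 0 ≤ 1 - ‖y₀‖ ^ p.toReal := by
    have h1 : 0 ≤ ‖e₀‖ ^ p.toReal := Real.rpow_nonneg (norm_nonneg _) _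
    linarith
  set R := (1 - ‖y₀‖ ^ p.toReal) ^ (1/p.toReal) with hRdef
  have hR0 : 0 ≤ R := Real.rpow_nonneg hs _
  have hRpow : R ^ p.toReal = 1 - ‖y₀‖ ^ p.toReal := by
    rw [hRdef, ← Real.rpow_mul hs, one_div, inv_mul_cancel₀ hpr.ne', Real.rpow_one]
  have he₀R : ‖e₀‖ ≤ R := by
    have h1 : ‖e₀‖ ^ p.toReal ≤ R ^ p.toReal := by rw [hRpow]; linarith
    have h2 : (‖e₀‖ ^ p.toReal) ^ (1/p.toReal) ≤ (R ^ p.toReal) ^ (1/p.toReal) :=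
      Real.rpow_le_rpow (by positivity) h1 (by positivity)
    rwa [← Real.rpow_mul (norm_nonneg _), ← Real.rpow_mul hR0, mul_one_div,
      div_self hpr.ne', Real.rpow_one, Real.rpow_one] at h2
  have hmemR : ∀ e : E, ‖e‖ ≤ R → ‖(WithLp.equiv p (E × Y)).symm (e, y₀)‖ ≤ 1 := by
    intro e he
    rw [aux_mem_ball_iff p hp2]
    have h1 : ‖e‖ ^ p.toReal ≤ R ^ p.toReal :=
      Real.rpow_le_rpow (norm_nonneg _) he hpr.le
    rw [hRpow] at h1; linarith
  set ψ : E →L[ℝ] ℝ := φ.comp (inlLp p) with hψdef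
  have hψ_apply : ∀ e : E, ψ e = φ ((WithLp.equiv p (E × Y)).symm (e, 0)) := fun e => rfl
  have hext : ∀ z w : WithLp p (E × Y), z.fst = w.fst → z.snd = w.snd → z = w := by
    intro z w h1 h2
    apply (WithLp.equiv p (E × Y)).injective
    exact Prod.ext h1 h2
  have hdecomp : ∀ e : E, (WithLp.equiv p (E × Y)).symm (e, y₀)
      = inlLp p e + x₀ - inlLp p e₀ := by
    intro e
    apply hext
    · show e = e + e₀ - e₀; abel
    · show y₀ = 0 + y₀ - 0; abel
  have hφsymm : ∀ e : E, φ ((WithLp.equiv p (E × Y)).symm (e, y₀))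
      = ψ e + (φ x₀ - ψ e₀) := by
    intro e
    rw [hdecomp e, map_sub, map_add]
    show φ (inlLp p e) + φ x₀ - φ (inlLp p e₀) = φ (inlLp p e) + (φ x₀ - φ (inlLp p e₀))
    ring
  set c' := c - (φ x₀ - ψ e₀) with hc'def
  have hc' : c' < ψ e₀ := by
    have h1 : φ ((WithLp.equiv p (E × Y)).symm (e₀, y₀)) = ψ e₀ + (φ x₀ - ψ e₀) :=
      hφsymm e₀
    rw [hx₀eq] at h1
    rw [hc'def]; linarith
  rcases eq_or_lt_of_le hR0 with hR | hR
  · -- R = 0, hence e₀ = 0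
    have he₀0 : e₀ = 0 := norm_le_zero_iff.mp (he₀R.trans hR.symm.le)
    obtain ⟨g, hg1, hg2⟩ := exists_dual_vector ℝ w (norm_ne_zero_iff.mpr hw0)
    refine ⟨x₀, hx₀A, hx₀, g, hg1, ?_, ?_⟩
    · show ‖e₀‖ - δ ≤ g e₀
      rw [he₀0]; simp [hδ.le]
    · have hg2' : g w = ‖w‖ := by exact_mod_cast hg2
      rw [hg2']; linarith
  · -- 0 < R
    set xb := R⁻¹ • e₀ with hxbdef
    have hxb1 : ‖xb‖ ≤ 1 := by
      rw [hxbdef, norm_smul, Real.norm_eq_abs, abs_of_nonneg (by positivity)]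
      rw [inv_mul_le_iff₀ hR, mul_one]; exact he₀R
    set t := R⁻¹ * c' with htdef
    have htlt : t < ψ xb := by
      rw [hxbdef, map_smul]
      exact mul_lt_mul_of_pos_left hc' (by positivity)
    set wu := ‖w‖⁻¹ • w with hwudef
    have hwn : 0 < ‖w‖ := norm_pos_iff.mpr hw0
    have hwu1 : ‖wu‖ = 1 := by
      rw [hwudef, norm_smul, Real.norm_eq_abs, abs_of_nonneg (by positivity)]
      field_simp
    set δ' := δ / (R + ‖w‖) with hδ'def
    have hδ'pos : 0 < δ' := div_pos hδ (by linarith)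
    obtain ⟨x, hx1, hx2, hx3⟩ := daugavet_slice hE ψ t xb hxb1 htlt wu hwu1 δ' hδ'pos
    set e := R • x with hedef
    have he_le : ‖e‖ ≤ R := by
      rw [hedef, norm_smul, Real.norm_eq_abs, abs_of_nonneg hR0]
      nlinarith
    have hψe : c' < ψ e := by
      have h1 : ψ e = R * ψ x := by rw [hedef, map_smul]; rfl
      rw [h1]
      have h2 : R * t < R * ψ x := mul_lt_mul_of_pos_left hx2 hR
      rw [htdef] at h2
      rw [show R * (R⁻¹ * c') = c' by field_simp] at h2
      exact h2
    have hnorm_ew : R + ‖w‖ - δ ≤ ‖e + w‖ := by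
      have comb := comb_norm x wu hx1 (le_of_eq hwu1) R ‖w‖ hR0 (norm_nonneg w)
      have hww : ‖w‖ • wu = w := by
        rw [hwudef, smul_smul, mul_inv_cancel₀ hwn.ne', one_smul]
      rw [hww] at comb
      have h3 : (R + ‖w‖) * (2 - ‖x + wu‖) ≤ (R + ‖w‖) * δ' := by
        apply mul_le_mul_of_nonneg_left (by linarith) (by linarith)
      rw [hδ'def, mul_div_cancel₀ _ (by linarith : R + ‖w‖ ≠ 0)] at h3
      rw [hedef]
      linarith
    have hew0 : e + w ≠ 0 := by
      intro h0
      rw [h0, norm_zero] at hnorm_ew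
      linarith
    obtain ⟨g, hg1, hg2⟩ := exists_dual_vector ℝ (e + w) (norm_ne_zero_iff.mpr hew0)
    have hg2' : g (e + w) = ‖e + w‖ := by exact_mod_cast hg2
    have hgsum : g e + g w = ‖e + w‖ := by rw [← hg2', map_add]
    have hge_le : g e ≤ R := by
      calc g e ≤ |g e| := le_abs_self _
        _ = ‖g e‖ := (Real.norm_eq_abs _).symm
        _ ≤ ‖g‖ * ‖e‖ := g.le_opNorm e
        _ ≤ 1 * R := mul_le_mul (le_of_eq hg1) he_le (norm_nonneg _) zero_le_one
        _ = R := one_mul _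
    have hgw_le : g w ≤ ‖w‖ := by
      calc g w ≤ |g w| := le_abs_self _
        _ = ‖g w‖ := (Real.norm_eq_abs _).symm
        _ ≤ ‖g‖ * ‖w‖ := g.le_opNorm w
        _ = ‖w‖ := by rw [hg1, one_mul]
    refine ⟨(WithLp.equiv p (E × Y)).symm (e, y₀), hmemR e he_le, ?_, g, hg1, ?_, ?_⟩
    · rw [hφsymm e]; rw [hc'def] at hψe; linarith
    · show ‖e‖ - δ ≤ g e
      have := hnorm_ew
      linarith [he_le]
    · linarith

set_option maxHeartbeats 2000000 in
/-- if `E` has the Daugavet property and `1 < p < ∞`, then any SCD point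
`(a,b)` of the unit ball of `E ⊕_p Y` has `a = 0`. -/
theorem stmt15 {E Y : Type*} [NormedAddCommGroup E] [NormedSpace ℝ E] [CompleteSpace E]
    [NormedAddCommGroup Y] [NormedSpace ℝ Y] [CompleteSpace Y]
    (hE : DaugavetProperty E)
    (p : ENNReal) [Fact (1 ≤ p)] (hp1 : 1 < p) (hp2 : p ≠ ⊤) (a : E) (b : Y)
    (h : SCDPoint (Metric.closedBall (0 : WithLp p (E × Y)) 1)
      ((WithLp.equiv p (E × Y)).symm (a, b))) :
    a = 0 := by
  by_contra ha0
  obtain ⟨hvA, V, hsl, hdet⟩ := h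
  set v : WithLp p (E × Y) := (WithLp.equiv p (E × Y)).symm (a, b) with hvdef
  have hva : v.fst = a := rfl
  have hnv : ‖v‖ ≤ 1 := mem_closedBall_zero_iff.mp hvA
  have ha1 : ‖a‖ ≤ 1 := by
    have h1 := aux_fst_norm_le p hp2 v
    rw [hva] at h1
    linarith
  have hapos : 0 < ‖a‖ := norm_pos_iff.mpr ha0
  set ε := ‖a‖/4 with hεdef
  have hε : 0 < ε := by positivity
  have hε4 : ε ≤ 1/4 := by rw [hεdef]; linarith
  set u : E := -(‖a‖⁻¹ • a) with hudef
  have hu : ‖u‖ = 1 := by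
    rw [hudef, norm_neg, norm_smul, Real.norm_eq_abs, abs_of_nonneg (by positivity)]
    field_simp
  have hau : a = -(‖a‖ • u) := by
    rw [hudef, smul_neg, neg_neg, smul_smul, mul_inv_cancel₀ hapos.ne', one_smul]
  -- extract slice data
  have hVdata : ∀ n, ∃ (φ : WithLp p (E × Y) →L[ℝ] ℝ) (c : ℝ),
      V n = {z | z ∈ closedBall (0 : WithLp p (E × Y)) 1 ∧ c < φ z} := by
    intro n
    obtain ⟨hne, φ, α, hα, hVeq⟩ := hsl n
    exact ⟨φ, sSup (⇑φ '' closedBall (0 : WithLp p (E × Y)) 1) - α, hVeq⟩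
  choose φf cf hVeq using hVdata
  have hVmem : ∀ n (z : WithLp p (E × Y)), z ∈ V n ↔ (‖z‖ ≤ 1 ∧ cf n < φf n z) := by
    intro n z
    rw [hVeq n]
    simp [Set.mem_setOf_eq, mem_closedBall_zero_iff]
  have hVne : ∀ n, (V n).Nonempty := fun n => (hsl n).1
  -- recursion
  obtain ⟨x, g, hGood⟩ := exists_good_seq (G := E →L[ℝ] ℝ)
    (fun n xs (g : E →L[ℝ] ℝ) => (∀ i : Fin (n+1), xs i ∈ V (i : ℕ)) ∧ ‖g‖ = 1 ∧
      (1 - g u) + (∑ i : Fin (n+1), (‖(xs i).fst‖ - g (xs i).fst))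
        ≤ ε * (1 - (2⁻¹:ℝ)^(n+1)))
    (by -- base
      obtain ⟨x₀, hx₀⟩ := hVne 0
      rw [hVmem 0 x₀] at hx₀
      obtain ⟨x', hx'1, hx'2, g, hg1, hg2, hg3⟩ :=
        step_lemma hE p hp2 (φf 0) (cf 0) x₀ hx₀.1 hx₀.2 u (ε/4) (by positivity)
          (by rw [hu]; linarith)
      refine ⟨fun _ => x', g, fun i => ?_, hg1, ?_⟩
      · have hi0 : (i : ℕ) = 0 := by omega
        rw [hi0, hVmem 0]
        exact ⟨hx'1, hx'2⟩
      · rw [hu] at hg3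
        simp only [Fin.sum_univ_one]
        norm_num
        linarith)
    (by -- step
      intro n xs g hG
      obtain ⟨hmem, hgnorm, hsum⟩ := hG
      have hb : ∀ zz : E, g zz ≤ ‖zz‖ := fun zz => by
        calc g zz ≤ |g zz| := le_abs_self _
          _ = ‖g zz‖ := (Real.norm_eq_abs _).symm
          _ ≤ ‖g‖ * ‖zz‖ := g.le_opNorm zz
          _ = ‖zz‖ := by rw [hgnorm, one_mul]
      set w := u + ∑ i : Fin (n+1), (xs i).fst with hwdef
      have hgw_eq : g w = (1 + ∑ i : Fin (n+1), ‖(xs i).fst‖)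
          - ((1 - g u) + ∑ i : Fin (n+1), (‖(xs i).fst‖ - g ((xs i).fst))) := by
        rw [hwdef, map_add, map_sum, Finset.sum_sub_distrib]
        ring
      have hgw_le : g w ≤ ‖w‖ := hb w
      have hq0 : (0:ℝ) ≤ (2⁻¹:ℝ)^(n+1) := by positivity
      have hq1 : (2⁻¹:ℝ)^(n+1) ≤ 1 := pow_le_one₀ (by norm_num) (by norm_num)
      have hw_lb_exact : (1 + ∑ i : Fin (n+1), ‖(xs i).fst‖)
          - (ε * (1 - (2⁻¹:ℝ)^(n+1))) ≤ ‖w‖ := by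
        rw [hgw_eq] at hgw_le
        linarith
      have hsum_norm_nonneg : 0 ≤ ∑ i : Fin (n+1), ‖(xs i).fst‖ :=
        Finset.sum_nonneg (fun i _ => norm_nonneg _)
      have hεq : ε * (1 - (2⁻¹:ℝ)^(n+1)) ≤ ε := by nlinarith
      have hw_lb' : 3/4 ≤ ‖w‖ := by linarith
      set δ := ε * (2⁻¹:ℝ)^(n+1+2) with hδdef
      have hq0' : (0:ℝ) < (2⁻¹:ℝ)^(n+1+2) := by positivity
      have hq1' : (2⁻¹:ℝ)^(n+1+2) ≤ 1 := pow_le_one₀ (by norm_num) (by norm_num)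
      have hδpos : 0 < δ := by rw [hδdef]; positivity
      have hδsmall : δ ≤ ε := by rw [hδdef]; nlinarith
      have hδw : δ < ‖w‖ := by linarith
      obtain ⟨x₀, hx₀⟩ := hVne (n+1)
      rw [hVmem (n+1) x₀] at hx₀
      obtain ⟨x', hx'1, hx'2, g', hg'1, hg'2, hg'3⟩ :=
        step_lemma hE p hp2 (φf (n+1)) (cf (n+1)) x₀ hx₀.1 hx₀.2 w δ hδpos hδw
      refine ⟨x', g', fun i => ?_, hg'1, ?_⟩
      · rcases Fin.eq_castSucc_or_eq_last i with ⟨j, rfl⟩ | rfl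
        · rw [Fin.snoc_castSucc]
          have := hmem j
          simpa using this
        · rw [Fin.snoc_last]
          rw [show ((Fin.last (n+1) : Fin (n+2)) : ℕ) = n+1 from Fin.val_last _,
            hVmem (n+1)]
          exact ⟨hx'1, hx'2⟩
      · rw [Fin.sum_univ_castSucc]
        simp only [Fin.snoc_castSucc, Fin.snoc_last]
        have hg'w : g' w = g' u + ∑ i : Fin (n+1), g' ((xs i).fst) := by
          rw [hwdef, map_add, map_sum]
        have hsplit : ∑ i : Fin (n+1), (‖(xs i).fst‖ - g' ((xs i).fst))
            = (∑ i : Fin (n+1), ‖(xs i).fst‖) - ∑ i : Fin (n+1), g' ((xs i).fst) :=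
          Finset.sum_sub_distrib _ _
        have harith : ε * (1 - (2⁻¹:ℝ)^(n+1)) + 2*δ = ε * (1 - (2⁻¹:ℝ)^(n+1+1)) := by
          rw [hδdef]; ring
        linarith [hg'2, hg'3])
  -- deficit consequences
  have hbound : ∀ n, (1 - g n u ≤ ε) ∧
      ∀ i : Fin (n+1), ‖(x (i:ℕ)).fst‖ - g n ((x (i:ℕ)).fst) ≤ ε := by
    intro n
    obtain ⟨_, hgnorm, hsum⟩ := hGood n
    have hb : ∀ zz : E, g n zz ≤ ‖zz‖ := fun zz => by
      calc g n zz ≤ |g n zz| := le_abs_self _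
        _ = ‖g n zz‖ := (Real.norm_eq_abs _).symm
        _ ≤ ‖g n‖ * ‖zz‖ := (g n).le_opNorm zz
        _ = ‖zz‖ := by rw [hgnorm, one_mul]
    have hnn : ∀ i : Fin (n+1), 0 ≤ ‖(x (i:ℕ)).fst‖ - g n ((x (i:ℕ)).fst) := fun i => by
      have := hb (x (i:ℕ)).fst; linarith
    have hun : 0 ≤ 1 - g n u := by
      have := hb u; rw [hu] at this; linarith
    have hsnn : 0 ≤ ∑ i : Fin (n+1), (‖(x (i:ℕ)).fst‖ - g n ((x (i:ℕ)).fst)) :=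
      Finset.sum_nonneg (fun i _ => hnn i)
    have hq0 : (0:ℝ) ≤ (2⁻¹:ℝ)^(n+1) := by positivity
    have htot : (1 - g n u) + ∑ i : Fin (n+1), (‖(x (i:ℕ)).fst‖ - g n ((x (i:ℕ)).fst))
        ≤ ε := le_trans hsum (by nlinarith)
    refine ⟨by linarith, fun i => ?_⟩
    have := Finset.single_le_sum (fun j _ => hnn j) (Finset.mem_univ i)
    linarith
  have hxVn : ∀ n, x n ∈ V n := by
    intro n
    have h1 := (hGood n).1 (Fin.last n)
    simpa using h1
  set B := Set.range x with hBdef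
  have hBA : B ⊆ closedBall (0 : WithLp p (E × Y)) 1 := by
    rintro z ⟨n, rfl⟩
    exact mem_closedBall_zero_iff.mpr ((hVmem n (x n)).mp (hxVn n)).1
  have hBint : ∀ n, (B ∩ V n).Nonempty := fun n => ⟨x n, ⟨n, rfl⟩, hxVn n⟩
  have hvcl := hdet B hBA hBint
  have hkey : ∀ z ∈ convexHull ℝ B, ‖a‖/2 ≤ ‖z - v‖ := by
    intro z hz
    have hzn : ∃ n, z ∈ convexHull ℝ (x '' Iic n) := by
      have hsub : convexHull ℝ B ⊆ ⋃ n, convexHull ℝ (x '' Iic n) := by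
        apply convexHull_min
        · rintro zz ⟨n, rfl⟩
          exact mem_iUnion.mpr ⟨n, subset_convexHull ℝ _
            (mem_image_of_mem x (mem_Iic.mpr le_rfl))⟩
        · apply Directed.convex_iUnion
          · intro m n
            exact ⟨max m n,
              convexHull_mono (image_mono (Iic_subset_Iic.mpr (le_max_left _ _))),
              convexHull_mono (image_mono (Iic_subset_Iic.mpr (le_max_right _ _)))⟩
          · intro n; exact convex_convexHull ℝ _
      exact mem_iUnion.mp (hsub hz)
    obtain ⟨n, hzn⟩ := hzn
    have hlin : IsLinearMap ℝ (fun zz : WithLp p (E × Y) => g n zz.fst) := by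
      constructor
      · intro z1 z2
        show g n ((z1 + z2).fst) = _
        rw [show (z1 + z2).fst = z1.fst + z2.fst from rfl, map_add]
      · intro c z1
        show g n ((c • z1).fst) = _
        rw [show (c • z1).fst = c • z1.fst from rfl, map_smul]
    have hhalf : z ∈ {zz : WithLp p (E × Y) | -ε ≤ g n zz.fst} := by
      apply convexHull_min ?_ (convex_halfSpace_ge hlin (-ε)) hzn
      rintro zz ⟨i, hi, rfl⟩
      have hbd : i < n + 1 := Nat.lt_succ_of_le (mem_Iic.mp hi)
      have h2 := (hbound n).2 ⟨i, hbd⟩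
      have h3 : (0:ℝ) ≤ ‖(x i).fst‖ := norm_nonneg _
      show -ε ≤ g n (x i).fst
      simp only [Fin.val_mk] at h2
      linarith
    have h1 : -ε ≤ g n z.fst := hhalf
    have h2 : g n a ≤ -(‖a‖ * (1 - ε)) := by
      have hga : g n a = -(‖a‖ * g n u) := by
        conv_lhs => rw [hau]
        rw [map_neg, map_smul]
        simp [smul_eq_mul]
      rw [hga]
      have h3 : ‖a‖ * (1 - ε) ≤ ‖a‖ * g n u :=
        mul_le_mul_of_nonneg_left (by linarith [(hbound n).1]) (norm_nonneg a)
      linarith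
    have h4 : g n ((z - v).fst) = g n z.fst - g n a := by
      have h4' := hlin.map_sub z v
      rw [h4', hva]
    have h5 : g n ((z - v).fst) ≤ ‖z - v‖ := by
      have hgn : ‖g n‖ = 1 := (hGood n).2.1
      calc g n ((z - v).fst) ≤ |g n ((z - v).fst)| := le_abs_self _
        _ = ‖g n ((z - v).fst)‖ := (Real.norm_eq_abs _).symm
        _ ≤ ‖g n‖ * ‖(z - v).fst‖ := (g n).le_opNorm _
        _ = ‖(z - v).fst‖ := by rw [hgn, one_mul]
        _ ≤ ‖z - v‖ := aux_fst_norm_le p hp2 _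
    have hcalc : ‖a‖/2 ≤ g n z.fst - g n a := by nlinarith
    rw [h4] at h5
    linarith
  rw [Metric.mem_closure_iff] at hvcl
  obtain ⟨z, hzB, hzd⟩ := hvcl (‖a‖/2) (by positivity)
  have hk := hkey z hzB
  rw [dist_comm, dist_eq_norm] at hzd
  linarith
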